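/- With F of characteristic 3, G = T_{3m}, and s the sum of all 3-elements of G, the annihilator Ann_{FG}(s) is a nil ideal and hence Ann_{FG}(s) ⊆ J(FG). -/

import Mathlib

/-- Relations of the presentation `T_{3m} = ⟨x, y | x^m = y^3 = 1, y⁻¹xy = x^t⟩`. -/
def T3mRels (m t : ℕ) : Set (FreeGroup (Fin 2)) :=
  {FreeGroup.of 0 ^ m, FreeGroup.of 1 ^ 3,
   (FreeGroup.of 1)⁻¹ * FreeGroup.of 0 * FreeGroup.of 1 * (FreeGroup.of 0 ^ t)⁻¹}

/-- The group `T_{3m}` given by the presentation `⟨x, y | x^m = y^3 = 1, y⁻¹xy = x^t⟩`. -/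
abbrev T3m (m t : ℕ) : Type := PresentedGroup (T3mRels m t)

/-- The generator `x` of `T_{3m}`. -/
def xg (m t : ℕ) : T3m m t := PresentedGroup.of 0

/-- The generator `y` of `T_{3m}`. -/
def yg (m t : ℕ) : T3m m t := PresentedGroup.of 1


namespace T3mAux

section Rels
variable (m t : ℕ)

lemma rel_eq_one {r : FreeGroup (Fin 2)} (hr : r ∈ T3mRels m t) :
    PresentedGroup.mk (T3mRels m t) r = 1 := by
  have := Subgroup.subset_normalClosure (s := T3mRels m t) hr
  exact (QuotientGroup.eq_one_iff _).2 this

lemma hx_rel : xg m t ^ m = 1 := by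
  have := rel_eq_one m t (r := FreeGroup.of 0 ^ m) (by left; rfl)
  rw [map_pow] at this
  exact this

lemma hy_rel : yg m t ^ 3 = 1 := by
  have := rel_eq_one m t (r := FreeGroup.of 1 ^ 3) (by right; left; rfl)
  rw [map_pow] at this
  exact this

lemma hconj_rel : (yg m t)⁻¹ * xg m t * yg m t = xg m t ^ t := by
  have := rel_eq_one m t
    (r := (FreeGroup.of 1)⁻¹ * FreeGroup.of 0 * FreeGroup.of 1 * (FreeGroup.of 0 ^ t)⁻¹)
    (by right; right; rfl)
  rw [map_mul, map_mul, map_mul, map_inv, map_inv, map_pow] at this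
  rw [mul_inv_eq_one] at this
  exact this
end Rels


variable (m t : ℕ)

def X0 : Equiv.Perm (ZMod m × ZMod 3) :=
  ⟨fun p => (p.1 + 1, p.2), fun p => (p.1 - 1, p.2), fun p => by simp, fun p => by simp⟩

def Y0 (htm : (t : ZMod m) ^ 3 = 1) : Equiv.Perm (ZMod m × ZMod 3) :=
  ⟨fun p => ((t : ZMod m) ^ 2 * p.1, p.2 + 1), fun p => ((t : ZMod m) * p.1, p.2 - 1),
   fun p => by simp [← mul_assoc, ← pow_succ', htm],
   fun p => by simp [← mul_assoc, ← pow_succ, htm]⟩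

variable {m t}
variable (htm : (t : ZMod m) ^ 3 = 1)

lemma X0_pow (n : ℕ) : ∀ p : ZMod m × ZMod 3, (X0 m ^ n) p = (p.1 + n, p.2) := by
  induction n with
  | zero => intro p; simp
  | succ n ih =>
    intro p
    rw [pow_succ, Equiv.Perm.mul_apply, ih]
    show ((X0 m p).1 + n, (X0 m p).2) = _
    simp only [X0, Equiv.coe_fn_mk, Prod.mk.injEq]
    exact ⟨by push_cast; ring, trivial⟩

lemma Y0_pow_zero (n : ℕ) : ∀ c : ZMod 3, ((Y0 m t htm) ^ n) (0, c) = (0, c + n) := by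
  induction n with
  | zero => intro c; simp
  | succ n ih =>
    intro c
    rw [pow_succ, Equiv.Perm.mul_apply]
    show ((Y0 m t htm) ^ n) ((t : ZMod m)^2 * 0, c + 1) = _
    rw [mul_zero, ih]
    simp only [Prod.mk.injEq]
    exact ⟨trivial, by push_cast; ring⟩

lemma X0_pow_m : (X0 m) ^ m = 1 := by
  ext p
  · rw [X0_pow]; simp
  · rw [X0_pow]; simp

lemma Y0_pow_three : (Y0 m t htm) ^ 3 = 1 := by
  ext p
  · show ((Y0 m t htm) ((Y0 m t htm) ((Y0 m t htm) p))).1 = p.1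
    simp only [Y0, Equiv.coe_fn_mk]
    calc (t:ZMod m)^2 * ((t:ZMod m)^2*((t:ZMod m)^2 * p.1)) = ((t:ZMod m)^3)^2 * p.1 := by ring
    _ = p.1 := by rw [htm]; ring
  · show ((Y0 m t htm) ((Y0 m t htm) ((Y0 m t htm) p))).2 = p.2
    simp only [Y0, Equiv.coe_fn_mk]
    have h3 : ((3:ℕ) : ZMod 3) = 0 := ZMod.natCast_self 3
    calc p.2 + 1 + 1 + 1 = p.2 + ((3:ℕ):ZMod 3) := by push_cast; ring
    _ = p.2 := by rw [h3, add_zero]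

lemma Y0_conj : (Y0 m t htm)⁻¹ * (X0 m) * (Y0 m t htm) * ((X0 m) ^ t)⁻¹ = 1 := by
  rw [mul_inv_eq_one]
  have key : (X0 m) * (Y0 m t htm) = (Y0 m t htm) * (X0 m) ^ t := by
    ext p
    · show ((X0 m) ((Y0 m t htm) p)).1 = ((Y0 m t htm) (((X0 m)^t) p)).1
      rw [X0_pow]
      simp only [X0, Y0, Equiv.coe_fn_mk]
      calc (t:ZMod m)^2 * p.1 + 1 = (t:ZMod m)^2*p.1 + (t:ZMod m)^3 := by rw [htm]
      _ = (t:ZMod m)^2 * (p.1 + t) := by ring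
    · show ((X0 m) ((Y0 m t htm) p)).2 = ((Y0 m t htm) (((X0 m)^t) p)).2
      rw [X0_pow]
      simp only [X0, Y0, Equiv.coe_fn_mk]
  calc (Y0 m t htm)⁻¹ * (X0 m) * (Y0 m t htm) = (Y0 m t htm)⁻¹ * ((X0 m) * (Y0 m t htm)) := by
        rw [mul_assoc]
  _ = (X0 m)^t := by rw [key, ← mul_assoc, inv_mul_cancel, one_mul]

lemma phi.proof : ∀ r ∈ T3mRels m t,
    (FreeGroup.lift (fun i : Fin 2 => if i = 0 then X0 m else Y0 m t htm)) r = 1 := by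
  intro r hr
  rcases hr with h | h | h
  · subst h; rw [map_pow, FreeGroup.lift_apply_of]
    simpa using X0_pow_m (m := m)
  · subst h; rw [map_pow, FreeGroup.lift_apply_of]
    simpa using Y0_pow_three htm
  · subst h
    rw [map_mul, map_mul, map_mul, map_inv, map_inv, map_pow,
      FreeGroup.lift_apply_of, FreeGroup.lift_apply_of]
    simpa using Y0_conj htm

noncomputable def phi : T3m m t →* Equiv.Perm (ZMod m × ZMod 3) :=
  PresentedGroup.toGroup (phi.proof htm)

lemma phi_x : phi htm (xg m t) = X0 m := by
  simp [phi, xg]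

lemma phi_y : phi htm (yg m t) = Y0 m t htm := by
  simp [phi, yg]

/-- key injectivity: `x^i y^j = 1` with `i<m`, `j<3` forces `i=j=0` -/
lemma xy_eq_one (htm : (t : ZMod m) ^ 3 = 1) (hm0 : 0 < m) {i j : ℕ} (hi : i < m) (hj : j < 3)
    (h : xg m t ^ i * yg m t ^ j = 1) : i = 0 ∧ j = 0 := by
  have := congrArg (phi htm) h
  rw [map_mul, map_pow, map_pow, phi_x, phi_y, map_one] at this
  have h2 := congrArg (fun f : Equiv.Perm (ZMod m × ZMod 3) => f (0, 0)) this
  simp only [Equiv.Perm.mul_apply, Equiv.Perm.one_apply] at h2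
  rw [Y0_pow_zero htm, X0_pow] at h2
  simp only [Prod.mk.injEq] at h2
  obtain ⟨h3, h4⟩ := h2
  haveI : NeZero m := ⟨Nat.pos_iff_ne_zero.mp hm0⟩
  constructor
  · have hi0 : (i : ZMod m) = 0 := by rw [← h3]; ring
    rw [ZMod.natCast_eq_zero_iff] at hi0
    exact Nat.eq_zero_of_dvd_of_lt hi0 hi
  · have hj0 : (j : ZMod 3) = 0 := by rw [← h4]; ring
    rw [ZMod.natCast_eq_zero_iff] at hj0
    exact Nat.eq_zero_of_dvd_of_lt hj0 hj



section Generic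
variable {m t : ℕ} {G : Type*} [Group G] (x y : G)

lemma pow_mod_of (hx : x ^ m = 1) (n : ℕ) : x ^ (n % m) = x ^ n := by
  conv_rhs => rw [← Nat.div_add_mod n m]
  rw [pow_add, pow_mul, hx, one_pow, one_mul]

lemma conj_pow_of (hc : y⁻¹ * x * y = x ^ t) (n : ℕ) : y⁻¹ * x ^ n * y = x ^ (t * n) := by
  have h : y⁻¹ * x ^ n * y = (y⁻¹ * x * y) ^ n := by
    have := conj_pow (i := n) (a := y⁻¹) (b := x)
    simpa using this.symm
  rw [h, hc, ← pow_mul, mul_comm t n]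

lemma yx_comm (hxm : x ^ m = 1) (hc : y⁻¹ * x * y = x ^ t) (htm : t ^ 3 % m = 1 % m) (n : ℕ) :
    y * x ^ n = x ^ (t ^ 2 * n) * y := by
  have h2 : y⁻¹ * x ^ (t ^ 2 * n) * y = x ^ (t ^ 3 * n) := by
    rw [conj_pow_of x y hc, ← mul_assoc, ← pow_succ']
  have h3 : x ^ (t ^ 3 * n) = x ^ n := by
    rw [← pow_mod_of x hxm (t ^ 3 * n), ← pow_mod_of x hxm n]
    congr 1
    have : t ^ 3 * n % m = 1 * n % m := Nat.ModEq.mul_right n htm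
    simpa using this
  have h4 := h2.trans h3
  rw [← h4]; group
end Generic

section Alg

variable (F : Type*) [Field F] [CharP F 3] (m t : ℕ)

local notation "G" => T3m m t
local notation "R" => MonoidAlgebra F (T3m m t)
local notation "of'" => MonoidAlgebra.of F (T3m m t)
local notation "Xc" => MonoidAlgebra.of F (T3m m t) (xg m t)
local notation "Yc" => MonoidAlgebra.of F (T3m m t) (yg m t)

/-- `a` is the sum of all powers of `x`. -/
noncomputable def ahat : R := ∑ i ∈ Finset.range m, of' (xg m t ^ i)

/-- `ψ` evaluates polynomials at `Yc`. -/
noncomputable def psi : Polynomial F →ₐ[F] R := Polynomial.aeval (MonoidAlgebra.of F (T3m m t) (yg m t))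

variable {F m t}

section Facts

variable (hx : xg m t ^ m = 1) (hy : yg m t ^ 3 = 1)
  (hc : (yg m t)⁻¹ * xg m t * yg m t = xg m t ^ t)
  (htm' : t ^ 3 % m = 1 % m) (hm0 : 0 < m) (hmmod : m % 3 = 1)

lemma h3R : (3 : R) = 0 := by
  have h1 : ((3:ℕ) : F) = 0 := CharP.cast_eq_zero F 3
  have h2 : ((3:ℕ) : R) = algebraMap F R ((3:ℕ) : F) := by
    rw [map_natCast]
  have := h2.trans (by rw [h1, map_zero])
  simpa using this

include hx in
lemma ahat_mul_X : (ahat F m t) * Xc = ahat F m t := by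
  have h1 : (ahat F m t) * Xc = ∑ i ∈ Finset.range m, of' (xg m t ^ (i+1)) := by
    rw [ahat, Finset.sum_mul]
    refine Finset.sum_congr rfl fun i _ => ?_
    rw [← map_mul, ← pow_succ]
  have h2 : ∑ i ∈ Finset.range (m+1), of' (xg m t ^ i)
      = (∑ i ∈ Finset.range m, of' (xg m t ^ (i+1))) + of' (xg m t ^ 0) := by
    exact Finset.sum_range_succ' _ m
  have h3 : ∑ i ∈ Finset.range (m+1), of' (xg m t ^ i) = ahat F m t + of' (xg m t ^ m) := by
    rw [ahat, Finset.sum_range_succ]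
  rw [h1]
  have h4 := h3.symm.trans h2
  rw [hx, pow_zero] at h4
  simp only [map_one] at h4
  -- h4 : ahat + 1 = (∑ of (x^(i+1))) + 1
  exact (add_right_cancel h4).symm

include hx in
lemma X_mul_ahat : Xc * (ahat F m t) = ahat F m t := by
  have h1 : Xc * (ahat F m t) = ∑ i ∈ Finset.range m, of' (xg m t ^ (i+1)) := by
    rw [ahat, Finset.mul_sum]
    refine Finset.sum_congr rfl fun i _ => ?_
    rw [← map_mul, ← pow_succ']
  have h2 : ∑ i ∈ Finset.range (m+1), of' (xg m t ^ i)
      = (∑ i ∈ Finset.range m, of' (xg m t ^ (i+1))) + of' (xg m t ^ 0) := by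
    exact Finset.sum_range_succ' _ m
  have h3 : ∑ i ∈ Finset.range (m+1), of' (xg m t ^ i) = ahat F m t + of' (xg m t ^ m) := by
    rw [ahat, Finset.sum_range_succ]
  rw [h1]
  have h4 := h3.symm.trans h2
  rw [hx, pow_zero] at h4
  simp only [map_one] at h4
  exact (add_right_cancel h4).symm

include hx in
lemma Xpow_mul_ahat (n : ℕ) : of' (xg m t ^ n) * (ahat F m t) = ahat F m t := by
  induction n with
  | zero => rw [pow_zero, map_one, one_mul]
  | succ n ih =>
    rw [pow_succ', map_mul, mul_assoc, ih]
    exact X_mul_ahat hx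

include hx hmmod in
lemma ahat_sq : (ahat F m t) * (ahat F m t) = ahat F m t := by
  nth_rewrite 1 [ahat]
  rw [Finset.sum_mul]
  have h1 : ∀ i ∈ Finset.range m, of' (xg m t ^ i) * ahat F m t = ahat F m t :=
    fun i _ => Xpow_mul_ahat hx i
  rw [Finset.sum_congr rfl h1, Finset.sum_const, Finset.card_range]
  have h2 : (m : R) = 1 := by
    have : ((m % 3 + 3 * (m / 3) : ℕ) : R) = ((m : ℕ) : R) := by rw [Nat.mod_add_div]
    rw [← this, hmmod]
    push_cast
    rw [h3R, zero_mul, add_zero]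
  rw [nsmul_eq_mul, h2, one_mul]

include hx hc htm' hm0 in
lemma comm_ahat_Y : Commute (ahat F m t) Yc := by
  unfold Commute SemiconjBy
  have h1 : Yc * ahat F m t = ∑ i ∈ Finset.range m, of' (xg m t ^ (t^2 * i)) * Yc := by
    rw [ahat, Finset.mul_sum]
    refine Finset.sum_congr rfl fun i _ => ?_
    rw [← map_mul, yx_comm (xg m t) (yg m t) hx hc htm' i, map_mul]
  have h2 : ∑ i ∈ Finset.range m, of' (xg m t ^ (t^2 * i)) * Yc
      = ∑ i ∈ Finset.range m, of' (xg m t ^ i) * Yc := by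
    have key : ∀ (c₁ c₂ : ℕ), c₁ * c₂ % m = 1 % m →
        ∀ i ∈ Finset.range m, c₁ * (c₂ * i % m) % m = i := by
      intro c₁ c₂ hcc i hi
      have e1 : c₁ * (c₂ * i % m) ≡ (c₁ * c₂) * i [MOD m] := by
        calc c₁ * (c₂ * i % m) ≡ c₁ * (c₂ * i) [MOD m] :=
              Nat.ModEq.mul_left _ (Nat.mod_modEq _ _)
        _ = (c₁ * c₂) * i := by ring
      have e2 : (c₁ * c₂) * i ≡ 1 * i [MOD m] := Nat.ModEq.mul_right i hcc
      have e3 : c₁ * (c₂ * i % m) ≡ i [MOD m] := by simpa using e1.trans e2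
      have e4 : c₁ * (c₂ * i % m) % m = i % m := e3
      rw [e4, Nat.mod_eq_of_lt (Finset.mem_range.mp hi)]
    refine Finset.sum_nbij' (fun i => t^2 * i % m) (fun i => t * i % m) ?_ ?_ ?_ ?_ ?_
    · intro i _; exact Finset.mem_range.mpr (Nat.mod_lt _ hm0)
    · intro i _; exact Finset.mem_range.mpr (Nat.mod_lt _ hm0)
    · intro i hi
      exact key t (t^2) (by rw [show t * t^2 = t^3 by ring]; exact htm') i hi
    · intro i hi
      exact key (t^2) t (by rw [show t^2 * t = t^3 by ring]; exact htm') i hi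
    · intro i hi
      congr 2
      rw [← pow_mod_of (xg m t) hx (t^2 * i)]
  rw [h1, h2, ← Finset.sum_mul, ← ahat]

include hx hc htm' hm0 in
lemma comm_ahat_psi (P : Polynomial F) : Commute (ahat F m t) (psi F m t P) := by
  induction P using Polynomial.induction_on' with
  | add p q hp hq => rw [map_add]; exact hp.add_right hq
  | monomial n c =>
    rw [psi, Polynomial.aeval_monomial]
    have h1 : Commute (ahat F m t) (algebraMap F R c) := by
      unfold Commute SemiconjBy
      rw [Algebra.commutes]
    exact h1.mul_right ((comm_ahat_Y hx hc htm' hm0).pow_right n)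

include hx hc htm' hm0 hmmod in
lemma merge (U V : Polynomial F) :
    (ahat F m t * psi F m t U) * (ahat F m t * psi F m t V)
      = ahat F m t * psi F m t (U * V) := by
  have h1 := (comm_ahat_psi hx hc htm' hm0 U).eq
  calc (ahat F m t * psi F m t U) * (ahat F m t * psi F m t V)
      = ahat F m t * (psi F m t U * ahat F m t) * psi F m t V := by
        rw [mul_assoc, mul_assoc, mul_assoc]
  _ = ahat F m t * (ahat F m t * psi F m t U) * psi F m t V := by rw [← h1]
  _ = (ahat F m t * ahat F m t) * (psi F m t U * psi F m t V) := by
        rw [mul_assoc, mul_assoc, mul_assoc]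
  _ = ahat F m t * psi F m t (U * V) := by rw [ahat_sq hx hmmod, map_mul]

lemma psi_X : psi F m t Polynomial.X = Yc := Polynomial.aeval_X _

lemma psi_C (c : F) : psi F m t (Polynomial.C c) = algebraMap F R c := by simp [psi]

lemma psi_Xpow (n : ℕ) : psi F m t (Polynomial.X ^ n) = Yc ^ n := by
  rw [map_pow, psi_X]

include hy in
lemma Ycube : (Yc : R) ^ 3 = 1 := by
  rw [← map_pow, hy, map_one]

include hy in
lemma psi_X3sub1 (P : Polynomial F) : psi F m t ((Polynomial.X ^ 3 - 1) * P) = 0 := by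
  rw [map_mul, map_sub, psi_Xpow, map_one, Ycube hy, sub_self, zero_mul]

include hx hy hc htm' hm0 in
lemma ahat_mul_of (g : T3m m t) : ∃ j : ℕ, ahat F m t * of' g = ahat F m t * Yc ^ j := by
  have hcomm : ∀ n : ℕ, Commute (ahat F m t) (Yc ^ n) :=
    fun n => (comm_ahat_Y hx hc htm' hm0).pow_right n
  let H : Subgroup (T3m m t) :=
    { carrier := {g | ∃ j : ℕ, ahat F m t * of' g = ahat F m t * Yc ^ j}
      one_mem' := ⟨0, by rw [map_one, pow_zero]⟩
      mul_mem' := by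
        rintro g h ⟨j₁, e₁⟩ ⟨j₂, e₂⟩
        refine ⟨j₁ + j₂, ?_⟩
        calc ahat F m t * of' (g * h) = (ahat F m t * of' g) * of' h := by
              rw [map_mul, mul_assoc]
        _ = (Yc ^ j₁ * ahat F m t) * of' h := by rw [e₁, (hcomm j₁).eq]
        _ = Yc ^ j₁ * (ahat F m t * Yc ^ j₂) := by rw [mul_assoc, e₂]
        _ = Yc ^ j₁ * (Yc ^ j₂ * ahat F m t) := by rw [(hcomm j₂).eq]
        _ = Yc ^ (j₁ + j₂) * ahat F m t := by rw [← mul_assoc, ← pow_add]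
        _ = ahat F m t * Yc ^ (j₁ + j₂) := ((hcomm (j₁ + j₂)).eq).symm
      inv_mem' := by
        rintro g ⟨j, e⟩
        refine ⟨2 * j, ?_⟩
        have e2 : ahat F m t = ahat F m t * Yc ^ j * of' g⁻¹ := by
          calc ahat F m t = ahat F m t * (of' g * of' g⁻¹) := by
                rw [← map_mul, mul_inv_cancel, map_one, mul_one]
          _ = ahat F m t * of' g * of' g⁻¹ := by rw [mul_assoc]
          _ = ahat F m t * Yc ^ j * of' g⁻¹ := by rw [e]
        have e3 : Yc ^ (2 * j) * ahat F m t
            = Yc ^ (2 * j) * ahat F m t * Yc ^ j * of' g⁻¹ := by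
          nth_rewrite 1 [e2]
          rw [mul_assoc, mul_assoc, mul_assoc]
        have e4 : Yc ^ (2 * j) * ahat F m t * Yc ^ j = ahat F m t := by
          calc Yc ^ (2 * j) * ahat F m t * Yc ^ j
              = ahat F m t * (Yc ^ (2 * j) * Yc ^ j) := by
                rw [← (hcomm (2 * j)).eq, mul_assoc]
          _ = ahat F m t * (Yc ^ 3) ^ j := by rw [← pow_add, ← pow_mul,
                show 2 * j + j = 3 * j by ring]
          _ = ahat F m t := by rw [Ycube hy, one_pow, mul_one]
        rw [e4] at e3
        rw [← e3, ← (hcomm (2 * j)).eq] }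
  have hgen : ∀ i : Fin 2, PresentedGroup.of i ∈ H := by
    intro i
    fin_cases i
    · refine ⟨0, ?_⟩
      rw [pow_zero, mul_one]
      exact ahat_mul_X hx
    · refine ⟨1, ?_⟩
      rw [pow_one]
      rfl
  exact PresentedGroup.generated_by (T3mRels m t) H hgen g

include hx hy hc htm' hm0 hmmod in
lemma sandwich (r : R) : ∃ Q : Polynomial F,
    ahat F m t * r * ahat F m t = ahat F m t * psi F m t Q := by
  induction r using MonoidAlgebra.induction_on with
  | of g =>
    obtain ⟨j, hj⟩ := ahat_mul_of (F := F) hx hy hc htm' hm0 g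
    refine ⟨Polynomial.X ^ j, ?_⟩
    rw [hj, psi_Xpow]
    calc ahat F m t * Yc ^ j * ahat F m t
        = ahat F m t * (Yc ^ j * ahat F m t) := by rw [mul_assoc]
    _ = ahat F m t * (ahat F m t * Yc ^ j) := by
          rw [← ((comm_ahat_Y hx hc htm' hm0).pow_right j).eq]
    _ = (ahat F m t * ahat F m t) * Yc ^ j := by rw [mul_assoc]
    _ = ahat F m t * Yc ^ j := by rw [ahat_sq hx hmmod]
  | add f g hf hg =>
    obtain ⟨Q₁, h₁⟩ := hf
    obtain ⟨Q₂, h₂⟩ := hg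
    refine ⟨Q₁ + Q₂, ?_⟩
    rw [mul_add, add_mul, h₁, h₂, map_add, mul_add]
  | smul c f hf =>
    obtain ⟨Q, hQ⟩ := hf
    refine ⟨Polynomial.C c * Q, ?_⟩
    rw [mul_smul_comm, smul_mul_assoc, hQ, map_mul, psi_C]
    rw [← mul_assoc, ← Algebra.commutes c (ahat F m t), mul_assoc, ← Algebra.smul_def]

lemma h2R : (2 : R) = -1 := by
  have h : (3 : R) = 0 := h3R
  have h2 : (2 : R) = 3 - 1 := by norm_num
  rw [h2, h, zero_sub]

lemma h3poly : (3 : Polynomial F) = 0 := by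
  have h1 : ((3:ℕ) : F) = 0 := CharP.cast_eq_zero F 3
  have : ((3:ℕ) : Polynomial F) = Polynomial.C ((3:ℕ) : F) :=
    (map_natCast (Polynomial.C : F →+* Polynomial F) 3).symm
  have h2 := this.trans (by rw [h1, map_zero])
  simpa using h2

include hy in
lemma of_y_inv : of' (yg m t)⁻¹ = Yc ^ 2 := by
  have h : (yg m t)⁻¹ = yg m t ^ 2 := by
    rw [inv_eq_iff_mul_eq_one, ← pow_succ']
    exact hy
  rw [h, map_pow]

lemma expand_aw :
    ahat F m t * psi F m t (1 + Polynomial.X + Polynomial.X ^ 2)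
      = ∑ i ∈ Finset.range m, ∑ j ∈ Finset.range 3, of' (xg m t ^ i * yg m t ^ j) := by
  have hpsi : psi F m t (1 + Polynomial.X + Polynomial.X ^ 2) = 1 + Yc + Yc ^ 2 := by
    rw [map_add, map_add, map_one, psi_X, psi_Xpow]
  rw [hpsi, ahat, Finset.sum_mul]
  refine Finset.sum_congr rfl fun i _ => ?_
  rw [show (3:ℕ) = 2 + 1 from rfl, Finset.sum_range_succ, Finset.sum_range_succ,
    Finset.sum_range_one]
  rw [mul_add, mul_add, mul_one, pow_zero, mul_one, pow_one]
  simp only [← map_pow, ← map_mul]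

lemma nondeg
    (hinj : ∀ i j : ℕ, i < m → j < 3 → xg m t ^ i * yg m t ^ j = 1 → i = 0 ∧ j = 0)
    (hm0 : 0 < m) :
    ahat F m t * psi F m t (1 + Polynomial.X + Polynomial.X ^ 2) ≠ 0 := by
  classical
  intro h0
  rw [expand_aw] at h0
  have h1 := congrArg (fun z : MonoidAlgebra F (T3m m t) =>
    ((Finsupp.applyAddHom (1 : T3m m t)).comp (MonoidAlgebra.coeffAddEquiv : MonoidAlgebra F (T3m m t) ≃+ (T3m m t →₀ F)).toAddMonoidHom) z) h0
  simp only [map_sum, map_zero] at h1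
  have h2 : ∀ i ∈ Finset.range m, ∀ j ∈ Finset.range 3,
      ((Finsupp.applyAddHom (1 : T3m m t)).comp (MonoidAlgebra.coeffAddEquiv : MonoidAlgebra F (T3m m t) ≃+ (T3m m t →₀ F)).toAddMonoidHom) (of' (xg m t ^ i * yg m t ^ j))
        = if i = 0 ∧ j = 0 then (1:F) else 0 := by
    intro i hi j hj
    have : ((Finsupp.applyAddHom (1 : T3m m t)).comp (MonoidAlgebra.coeffAddEquiv : MonoidAlgebra F (T3m m t) ≃+ (T3m m t →₀ F)).toAddMonoidHom) (of' (xg m t ^ i * yg m t ^ j))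
        = (MonoidAlgebra.single (xg m t ^ i * yg m t ^ j) (1:F)).coeff 1 := rfl
    rw [this, MonoidAlgebra.single_apply]
    by_cases hij : i = 0 ∧ j = 0
    · obtain ⟨hi0, hj0⟩ := hij
      subst hi0; subst hj0
      simp
    · rw [if_neg hij, if_neg]
      intro heq
      exact hij (hinj i j (Finset.mem_range.mp hi) (Finset.mem_range.mp hj) heq)
  have h4 : (∑ i ∈ Finset.range m, ∑ j ∈ Finset.range 3,
      ((Finsupp.applyAddHom (1 : T3m m t)).comp (MonoidAlgebra.coeffAddEquiv : MonoidAlgebra F (T3m m t) ≃+ (T3m m t →₀ F)).toAddMonoidHom) (of' (xg m t ^ i * yg m t ^ j)))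
      = ∑ i ∈ Finset.range m, ∑ j ∈ Finset.range 3,
        (if i = 0 ∧ j = 0 then (1:F) else 0) :=
    Finset.sum_congr rfl fun i hi => Finset.sum_congr rfl fun j hj => h2 i hi j hj
  rw [h4] at h1
  have h3 : ∑ i ∈ Finset.range m, ∑ j ∈ Finset.range 3,
      (if i = 0 ∧ j = 0 then (1:F) else 0) = 1 := by
    rw [Finset.sum_eq_single 0]
    · rw [Finset.sum_eq_single 0]
      · simp
      · intro j _ hj0; simp [hj0]
      · intro h; exact absurd (Finset.mem_range.mpr (show (0:ℕ) < 3 by norm_num)) h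
    · intro i _ hi0
      refine Finset.sum_eq_zero fun j _ => ?_
      simp [hi0]
    · intro h; exact absurd (Finset.mem_range.mpr hm0) h
  rw [h3] at h1
  exact (one_ne_zero (α := F)) h1

include hy in
lemma s_eq : ahat F m t * of' (yg m t)⁻¹ + 1 + ahat F m t * Yc
    = ahat F m t * psi F m t (Polynomial.X + Polynomial.X ^ 2) + 1 := by
  rw [of_y_inv hy, map_add, psi_X, psi_Xpow, mul_add]
  abel

include hx hy hc htm' hm0 hmmod in
lemma s_sq :
    (ahat F m t * psi F m t (Polynomial.X + Polynomial.X ^ 2) + 1)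
      * (ahat F m t * psi F m t (Polynomial.X + Polynomial.X ^ 2) + 1)
      = 1 - ahat F m t := by
  set W : Polynomial F := Polynomial.X + Polynomial.X ^ 2 with hW
  set u : R := ahat F m t * psi F m t W with hu
  have e1 : (u + 1) * (u + 1) = u * u + (u + u) + 1 := by noncomm_ring
  have e2 : u * u = ahat F m t * psi F m t (W * W) := merge hx hc htm' hm0 hmmod W W
  have e3 : u * u + (u + u) = ahat F m t * psi F m t (W * W + (W + W)) := by
    rw [map_add (psi F m t) (W * W) (W + W), map_add (psi F m t) W W, e2, hu,
      mul_add, mul_add, mul_add]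
  have e4 : W * W + (W + W) = (Polynomial.X ^ 3 - 1) * (Polynomial.X + 2) + 2 := by
    have h3 := h3poly (F := F)
    rw [hW]
    linear_combination (Polynomial.X ^ 2 + Polynomial.X : Polynomial F) * h3
  have e5 : psi F m t (W * W + (W + W)) = 2 := by
    rw [e4, map_add, psi_X3sub1 hy, zero_add, map_ofNat]
  rw [e1, e3, e5]
  have e6 : ahat F m t * (2 : R) = -ahat F m t := by
    rw [h2R, mul_neg_one]
  rw [e6]
  abel

include hx hy hc htm' hm0 hmmod in
lemma master
    (hinj : ∀ i j : ℕ, i < m → j < 3 → xg m t ^ i * yg m t ^ j = 1 → i = 0 ∧ j = 0)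
    (α : R)
    (h1 : α * (ahat F m t * of' (yg m t)⁻¹ + 1 + ahat F m t * Yc) = 0)
    (h2 : (ahat F m t * of' (yg m t)⁻¹ + 1 + ahat F m t * Yc) * α = 0) :
    ∃ K : Polynomial F, α = ahat F m t * psi F m t ((Polynomial.X - 1) * K) := by
  set W : Polynomial F := Polynomial.X + Polynomial.X ^ 2 with hW
  rw [s_eq hy] at h1 h2
  set sA : R := ahat F m t * psi F m t W + 1 with hsA
  have hss : sA * sA = 1 - ahat F m t := s_sq hx hy hc htm' hm0 hmmod
  have hαa : α * ahat F m t = α := by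
    have e : α * (sA * sA) = 0 := by rw [← mul_assoc, h1, zero_mul]
    rw [hss, mul_sub, mul_one] at e
    have := sub_eq_zero.mp e
    exact this.symm
  have haα : ahat F m t * α = α := by
    have e : (sA * sA) * α = 0 := by rw [mul_assoc, h2, mul_zero]
    rw [hss, sub_mul, one_mul] at e
    have := sub_eq_zero.mp e
    exact this.symm
  obtain ⟨Q, hQ⟩ := sandwich hx hy hc htm' hm0 hmmod α
  rw [haα, hαa] at hQ
  -- hQ : α = ahat * ψ Q
  set c : F := Q.eval 1 with hcdef
  have hroot : (Polynomial.X - Polynomial.C 1) ∣ (Q - Polynomial.C c) := by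
    rw [Polynomial.dvd_iff_isRoot]
    simp [Polynomial.IsRoot, hcdef]
  obtain ⟨K, hK⟩ := hroot
  have hK' : Q = Polynomial.C c + (Polynomial.X - 1) * K := by
    rw [map_one] at hK
    linear_combination hK
  -- compute α * sA
  have hαs : α * sA = c • (ahat F m t * psi F m t (1 + Polynomial.X + Polynomial.X ^ 2)) := by
    have e1 : α * sA = ahat F m t * psi F m t (Q * W + Q) := by
      rw [hsA, mul_add, mul_one, hQ, merge hx hc htm' hm0 hmmod Q W, ← mul_add, ← map_add]
    have e2 : Q * W + Q = Polynomial.C c * (1 + Polynomial.X + Polynomial.X ^ 2)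
        + (Polynomial.X ^ 3 - 1) * K := by
      rw [hW]
      linear_combination (1 + Polynomial.X + Polynomial.X ^ 2 : Polynomial F) * hK'
    rw [e1, e2, map_add, map_mul, psi_C, psi_X3sub1 hy, add_zero,
      ← mul_assoc, ← Algebra.commutes c (ahat F m t), mul_assoc, ← Algebra.smul_def]
  rw [hαs] at h1
  have hc0 : c = 0 := by
    rcases smul_eq_zero.mp h1 with h | h
    · exact h
    · exact absurd h (nondeg hinj hm0)
  refine ⟨K, ?_⟩
  rw [hQ, hK', hc0, map_zero, zero_add]

include hx hc htm' hm0 hmmod in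
lemma absorb_left (U : Polynomial F) :
    ahat F m t * (ahat F m t * psi F m t U) = ahat F m t * psi F m t U := by
  rw [← mul_assoc, ahat_sq hx hmmod]

include hx hc htm' hm0 hmmod in
lemma absorb_right (U : Polynomial F) :
    (ahat F m t * psi F m t U) * ahat F m t = ahat F m t * psi F m t U := by
  rw [mul_assoc, ← (comm_ahat_psi hx hc htm' hm0 U).eq, ← mul_assoc, ahat_sq hx hmmod]

include hx hy hc htm' hm0 hmmod in
lemma triple (α β γ r₁ r₂ : R) (Pa Pb Pc : Polynomial F)
    (ha : α = ahat F m t * psi F m t ((Polynomial.X - 1) * Pa))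
    (hb : β = ahat F m t * psi F m t ((Polynomial.X - 1) * Pb))
    (hcq : γ = ahat F m t * psi F m t ((Polynomial.X - 1) * Pc)) :
    α * r₁ * β * r₂ * γ = 0 := by
  obtain ⟨Q₁, hQ₁⟩ := sandwich hx hy hc htm' hm0 hmmod r₁
  obtain ⟨Q₂, hQ₂⟩ := sandwich hx hy hc htm' hm0 hmmod r₂
  have habsα : α * ahat F m t = α := by
    rw [ha]; exact absorb_right hx hc htm' hm0 hmmod _
  have habsβ : ahat F m t * β = β := by rw [hb, absorb_left hx hc htm' hm0 hmmod]
  have habsγ : ahat F m t * γ = γ := by rw [hcq, absorb_left hx hc htm' hm0 hmmod]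
  have step1 : α * r₁ * β = α * (ahat F m t * r₁ * ahat F m t) * β := by
    conv_lhs => rw [← habsα, ← habsβ]
    simp only [mul_assoc]
  have step2 : α * r₁ * β = ahat F m t * psi F m t
      ((Polynomial.X - 1) * Pa * Q₁ * ((Polynomial.X - 1) * Pb)) := by
    rw [step1, hQ₁, ha, hb, merge hx hc htm' hm0 hmmod, merge hx hc htm' hm0 hmmod]
  have habsδ : (α * r₁ * β) * ahat F m t = α * r₁ * β := by
    rw [step2]; exact absorb_right hx hc htm' hm0 hmmod _
  have step3 : α * r₁ * β * r₂ * γ = (α * r₁ * β) * (ahat F m t * r₂ * ahat F m t) * γ := by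
    conv_lhs => rw [← habsγ]
    conv_lhs => rw [← habsδ]
    simp only [mul_assoc]
  have step4 : α * r₁ * β * r₂ * γ = ahat F m t * psi F m t
      ((Polynomial.X - 1) * Pa * Q₁ * ((Polynomial.X - 1) * Pb) * Q₂
        * ((Polynomial.X - 1) * Pc)) := by
    rw [step3, step2, hQ₂, hcq, merge hx hc htm' hm0 hmmod, merge hx hc htm' hm0 hmmod]
  have hpoly : (Polynomial.X - 1) * Pa * Q₁ * ((Polynomial.X - 1) * Pb) * Q₂
      * ((Polynomial.X - 1) * Pc)
      = (Polynomial.X ^ 3 - 1) * (Pa * Q₁ * Pb * Q₂ * Pc) := by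
    have hfd : ((Polynomial.X : Polynomial F) - 1) ^ 3 = Polynomial.X ^ 3 - 1 := by
      have h3 := h3poly (F := F)
      linear_combination (Polynomial.X - Polynomial.X ^ 2 : Polynomial F) * h3
    calc (Polynomial.X - 1) * Pa * Q₁ * ((Polynomial.X - 1) * Pb) * Q₂
        * ((Polynomial.X - 1) * Pc)
        = ((Polynomial.X : Polynomial F) - 1) ^ 3 * (Pa * Q₁ * Pb * Q₂ * Pc) := by ring
    _ = (Polynomial.X ^ 3 - 1) * (Pa * Q₁ * Pb * Q₂ * Pc) := by rw [hfd]
  rw [step4, hpoly, psi_X3sub1 hy, mul_zero]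

end Facts
end Alg

section Final
variable (F : Type*) [Field F] [CharP F 3]

theorem key (m t k : ℕ) (hm : m = 3 * k + 1) (ht : t ^ 3 % m = 1 % m) :
    ∀ α : MonoidAlgebra F (T3m m t),
      (α * ((∑ i ∈ Finset.range m, MonoidAlgebra.of F (T3m m t) (xg m t ^ i))
          * MonoidAlgebra.of F (T3m m t) (yg m t)⁻¹ + 1 +
          (∑ i ∈ Finset.range m, MonoidAlgebra.of F (T3m m t) (xg m t ^ i))
          * MonoidAlgebra.of F (T3m m t) (yg m t)) = 0 ∧
        ((∑ i ∈ Finset.range m, MonoidAlgebra.of F (T3m m t) (xg m t ^ i))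
          * MonoidAlgebra.of F (T3m m t) (yg m t)⁻¹ + 1 +
          (∑ i ∈ Finset.range m, MonoidAlgebra.of F (T3m m t) (xg m t ^ i))
          * MonoidAlgebra.of F (T3m m t) (yg m t)) * α = 0) →
      (∃ n : ℕ, α ^ n = 0) ∧ α ∈ (⊥ : Ideal (MonoidAlgebra F (T3m m t))).jacobson := by
  have hm0 : 0 < m := by omega
  have hmmod : m % 3 = 1 := by omega
  have hx := hx_rel m t
  have hy := hy_rel m t
  have hc := hconj_rel m t
  have htm : (t : ZMod m) ^ 3 = 1 := by
    have h' : ((t ^ 3 : ℕ) : ZMod m) = ((1 : ℕ) : ZMod m) :=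
      (ZMod.natCast_eq_natCast_iff _ _ _).mpr ht
    push_cast at h'
    exact h'
  have hinj : ∀ i j : ℕ, i < m → j < 3 → xg m t ^ i * yg m t ^ j = 1 → i = 0 ∧ j = 0 :=
    fun i j hi hj heq => xy_eq_one htm hm0 hi hj heq
  intro α hα
  obtain ⟨h1, h2⟩ := hα
  have hA : (∑ i ∈ Finset.range m, MonoidAlgebra.of F (T3m m t) (xg m t ^ i)) = ahat F m t := rfl
  rw [hA] at h1 h2
  obtain ⟨K, hK⟩ := master hx hy hc ht hm0 hmmod hinj α h1 h2
  constructor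
  · refine ⟨3, ?_⟩
    have h3 : α ^ 3 = α * 1 * α * 1 * α := by
      rw [mul_one, mul_one, pow_succ, pow_succ, pow_one]
    rw [h3]
    exact triple hx hy hc ht hm0 hmmod α α α 1 1 K K K hK hK hK
  · rw [Ideal.mem_jacobson_iff]
    intro yy
    refine ⟨1 - yy * α + (yy * α) * (yy * α), ?_⟩
    rw [Ideal.mem_bot]
    have htr := triple hx hy hc ht hm0 hmmod α α α yy yy K K K hK hK hK
    have hu : (yy * α) * (yy * α) * (yy * α) = 0 := by
      have e : (yy * α) * (yy * α) * (yy * α) = yy * (α * yy * α * yy * α) := by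
        simp only [mul_assoc]
      rw [e, htr, mul_zero]
    have hassoc : (1 - yy * α + (yy * α) * (yy * α)) * yy * α
        = (1 - yy * α + (yy * α) * (yy * α)) * (yy * α) := by rw [mul_assoc]
    rw [hassoc]
    have hfin : (1 - yy * α + (yy * α) * (yy * α)) * (yy * α)
        + (1 - yy * α + (yy * α) * (yy * α)) - 1
        = (yy * α) * (yy * α) * (yy * α) := by noncomm_ring
    rw [hfin, hu]

end Final
end T3mAux

/-- For `F` of characteristic 3, `G = T_{3m}` and `s` the sum of all 3-elements, every
element of `Ann_{FG}(s)` is nilpotent and `Ann_{FG}(s) ⊆ J(FG)`. -/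
theorem ann_s_nil_subset_jacobson (F : Type*) [Field F] [CharP F 3] (m t k : ℕ)
    (ht1 : 1 ≤ t) (hm : m = 3 * k + 1) (ht : t ^ 3 % m = 1 % m)
    (hgcd : Nat.gcd m (t - 1) = 1) :
    letI G := T3m m t
    letI xhat : MonoidAlgebra F G := ∑ i ∈ Finset.range m, MonoidAlgebra.of F G (xg m t ^ i)
    letI s : MonoidAlgebra F G :=
      xhat * MonoidAlgebra.of F G (yg m t)⁻¹ + 1 + xhat * MonoidAlgebra.of F G (yg m t)
    ∀ α : MonoidAlgebra F G, (α * s = 0 ∧ s * α = 0) →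
      (∃ n : ℕ, α ^ n = 0) ∧ α ∈ (⊥ : Ideal (MonoidAlgebra F G)).jacobson := by
  exact T3mAux.key F m t k hm ht
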